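/- arXiv:2501.07143 — 3 statements merged into one kernel-verified Lean document; each statement's English description precedes it below -/
import Mathlib

section
/- Let $\mu\in(0,1)$, $\Omega\subset\mathbb{R}^n$ a bounded domain with $C^1$ boundary, and $\rho\in C^1(\bar\Omega)\cap C^2(\Omega)$ a defining function with $\rho\Delta\rho$ (more precisely $\rho\nabla^2\rho$) continuous up to $\bar\Omega$ and vanishing on $\partial\Omega$, and $|\nabla\rho|=1$ on $\partial\Omega$. Then there exist positive constants $r$ and $K$, depending only on $n,\mu,\Omega,\rho$, such that for every $x_0\in\partial\Omega$ and every $x\in\Omega\cap B_r(x_0)$: $\Delta\big(|x-x_0|^\mu + K\rho(x)^\mu\big) \le 0$. -/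
open Set

noncomputable section

/-- Spatial partial derivative in the `i`-th coordinate direction. -/
def spd {n : ℕ} (f : EuclideanSpace ℝ (Fin n) → ℝ) (i : Fin n) :
    EuclideanSpace ℝ (Fin n) → ℝ :=
  fun x => fderiv ℝ f x (EuclideanSpace.single i 1)

open Metric Filter

section Stmt5Aux

variable {n : ℕ} {Ω : Set (EuclideanSpace ℝ (Fin n))} {ρ : EuclideanSpace ℝ (Fin n) → ℝ}

lemma stmt5_sum_sq_single (A : EuclideanSpace ℝ (Fin n) →L[ℝ] ℝ) :
    ∑ i, (A (EuclideanSpace.single i 1))^2 = ‖A‖^2 := by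
  set v := (InnerProductSpace.toDual ℝ (EuclideanSpace ℝ (Fin n))).symm A with hv
  have hAv : ∀ w, A w = (inner ℝ v w : ℝ) := by
    intro w
    exact (InnerProductSpace.toDual_symm_apply (𝕜:=ℝ) (y:=A) (x:=w)).symm
  have hnorm : ‖A‖ = ‖v‖ := by
    rw [hv, ← (InnerProductSpace.toDual ℝ (EuclideanSpace ℝ (Fin n))).symm.norm_map A]
  have h1 : ∀ i, A (EuclideanSpace.single i 1) = v i := by
    intro i
    rw [hAv, EuclideanSpace.inner_single_right]
    simp
  rw [hnorm]
  have h2 : ‖v‖^2 = ∑ i, (v i)^2 := by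
    rw [EuclideanSpace.norm_eq]
    rw [Real.sq_sqrt (by positivity)]
    simp [sq_abs]
  rw [h2]
  exact Finset.sum_congr rfl (fun i _ => by rw [h1])

lemma stmt5_patch (hρC1 : ContDiffOn ℝ 1 ρ (closure Ω)) (hΩopen : IsOpen Ω)
    {x : EuclideanSpace ℝ (Fin n)} (hx : x ∈ closure Ω) :
    ∃ v : Set (EuclideanSpace ℝ (Fin n)), IsOpen v ∧ x ∈ v ∧
      ∃ f' : EuclideanSpace ℝ (Fin n) → (EuclideanSpace ℝ (Fin n) →L[ℝ] ℝ),
      (∀ z ∈ closure Ω ∩ v, HasFDerivWithinAt ρ (f' z) (closure Ω) z) ∧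
      ContinuousWithinAt f' (closure Ω ∩ v) x ∧
      (∀ z ∈ Ω ∩ v, fderiv ℝ ρ z = f' z) := by
  have h : ContDiffWithinAt ℝ (0+1) ρ (closure Ω) x := by
    norm_num
    exact hρC1 x hx
  rw [contDiffWithinAt_succ_iff_hasFDerivWithinAt (by simp)] at h
  obtain ⟨u, hu, -, f', hf', hcont⟩ := h
  rw [insert_eq_of_mem hx] at hu
  obtain ⟨v, hvopen, hxv, hvu⟩ := mem_nhdsWithin.1 hu
  refine ⟨v, hvopen, hxv, f', ?_, ?_, ?_⟩
  · intro z hz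
    have h1 : HasFDerivWithinAt ρ (f' z) (v ∩ closure Ω) z :=
      (hf' z (hvu ⟨hz.2, hz.1⟩)).mono hvu
    exact h1.mono_of_mem_nhdsWithin (mem_nhdsWithin.2 ⟨v, hvopen, hz.2, subset_rfl⟩)
  · exact (hcont.continuousWithinAt).mono (fun w hw => hvu ⟨hw.2, hw.1⟩)
  · intro z hz
    have hmem : u ∈ nhds z :=
      Filter.mem_of_superset ((hΩopen.inter hvopen).mem_nhds hz)
        (fun w hw => hvu ⟨hw.2, subset_closure hw.1⟩)
    exact ((hf' z (hvu ⟨hz.2, subset_closure hz.1⟩)).hasFDerivAt hmem).fderiv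

lemma stmt5_ball_subset (hΩopen : IsOpen Ω) {z : EuclideanSpace ℝ (Fin n)} :
    ball z (infDist z Ωᶜ) ⊆ Ω := by
  intro w hw
  by_contra hwc
  have : infDist z Ωᶜ ≤ dist z w := infDist_le_dist_of_mem hwc
  rw [mem_ball, dist_comm] at hw
  linarith

lemma stmt5_uniqueDiff (hΩopen : IsOpen Ω) {z y : EuclideanSpace ℝ (Fin n)}
    (hz : z ∈ Ω) (hy : dist z y = infDist z Ωᶜ) (hpos : 0 < dist z y) :
    UniqueDiffWithinAt ℝ (closure Ω) y := by
  have hball : ball z (dist z y) ⊆ Ω := by rw [hy]; exact stmt5_ball_subset hΩopen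
  have h1 : UniqueDiffWithinAt ℝ (closedBall z (dist z y)) y := by
    refine uniqueDiffOn_convex (convex_closedBall _ _) ?_ y ?_
    · rw [interior_closedBall _ hpos.ne']
      exact nonempty_ball.2 hpos
    · rw [mem_closedBall, dist_comm]
  refine h1.mono ?_
  rw [← closure_ball z hpos.ne']
  exact closure_mono hball

lemma stmt5_rho_le_dist (hΩopen : IsOpen Ω)
    (hρC1 : ContDiffOn ℝ 1 ρ (closure Ω))
    (hρ0 : ∀ x ∈ frontier Ω, ρ x = 0)
    (hρgrad : ∀ x ∈ frontier Ω, ‖fderivWithin ℝ ρ (closure Ω) x‖ = 1)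
    (hdiff : ∀ p ∈ Ω, DifferentiableAt ℝ ρ p)
    {L : ℝ} (hL1 : 1 ≤ L) (hbd : ∀ p ∈ Ω, ‖fderiv ℝ ρ p‖ ≤ L)
    {z y : EuclideanSpace ℝ (Fin n)} (hz : z ∈ Ω) (hyf : y ∈ frontier Ω)
    (hd : dist z y = infDist z Ωᶜ) :
    ρ z ≤ L * dist z y := by
  set s : Set (EuclideanSpace ℝ (Fin n)) := segment ℝ y z with hs
  have hsub : s ⊆ closure Ω := by
    have h1 : s ⊆ closedBall z (dist z y) := by
      apply (convex_closedBall z (dist z y)).segment_subset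
      · rw [mem_closedBall, dist_comm]
      · exact mem_closedBall_self dist_nonneg
    rcases eq_or_lt_of_le (dist_nonneg (x := z) (y := y)) with h0 | hpos
    · have : y = z := by rw [← dist_eq_zero, dist_comm, ← h0]
      rw [hs, this, segment_same]
      exact singleton_subset_iff.2 (subset_closure hz)
    · have hball : ball z (dist z y) ⊆ Ω := by rw [hd]; exact stmt5_ball_subset hΩopen
      refine h1.trans ?_
      rw [← closure_ball z hpos.ne']
      exact closure_mono hball
  set F : EuclideanSpace ℝ (Fin n) → (EuclideanSpace ℝ (Fin n) →L[ℝ] ℝ) :=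
    open scoped Classical in fun p => if p ∈ Ω then fderiv ℝ ρ p else fderivWithin ℝ ρ (closure Ω) p with hF
  have key : ∀ p ∈ s, HasFDerivWithinAt ρ (F p) s p ∧ ‖F p‖ ≤ L := by
    intro p hp
    by_cases hpΩ : p ∈ Ω
    · refine ⟨?_, ?_⟩
      · rw [hF]; simp only [if_pos hpΩ]
        exact ((hdiff p hpΩ).hasFDerivAt).hasFDerivWithinAt
      · rw [hF]; simp only [if_pos hpΩ]; exact hbd p hpΩ
    · have hpf : p ∈ frontier Ω := by
        rw [hΩopen.frontier_eq]
        exact ⟨hsub hp, hpΩ⟩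
      have hdw : HasFDerivWithinAt ρ (fderivWithin ℝ ρ (closure Ω) p) (closure Ω) p :=
        ((hρC1 p (hsub hp)).differentiableWithinAt one_ne_zero).hasFDerivWithinAt
      refine ⟨?_, ?_⟩
      · rw [hF]; simp only [if_neg hpΩ]
        exact hdw.mono hsub
      · rw [hF]; simp only [if_neg hpΩ]
        rw [hρgrad p hpf]; exact hL1
  have mvt := (convex_segment y z).norm_image_sub_le_of_norm_hasFDerivWithin_le
    (fun p hp => (key p hp).1) (fun p hp => (key p hp).2)
    (left_mem_segment ℝ y z) (right_mem_segment ℝ y z)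
  rw [hρ0 y hyf] at mvt
  have h2 : ρ z ≤ ‖ρ z - 0‖ := by
    rw [sub_zero, Real.norm_eq_abs]; exact le_abs_self _
  calc ρ z ≤ ‖ρ z - 0‖ := h2
    _ ≤ L * ‖z - y‖ := mvt
    _ = L * dist z y := by rw [dist_eq_norm]

lemma stmt5_grad_bound (hΩopen : IsOpen Ω) (hΩbdd : Bornology.IsBounded Ω)
    (hρC1 : ContDiffOn ℝ 1 ρ (closure Ω)) :
    ∃ L : ℝ, 1 ≤ L ∧ ∀ z ∈ Ω, ‖fderiv ℝ ρ z‖ ≤ L := by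
  by_contra hcon
  push_neg at hcon
  have hseq : ∀ k : ℕ, ∃ z, z ∈ Ω ∧ (k : ℝ) + 1 < ‖fderiv ℝ ρ z‖ := by
    intro k
    obtain ⟨z, hz1, hz2⟩ := hcon ((k : ℝ) + 1) (by
      have : (0:ℝ) ≤ (k:ℝ) := Nat.cast_nonneg k
      linarith)
    exact ⟨z, hz1, hz2⟩
  choose z hzΩ hzn using hseq
  obtain ⟨a, ha, φ, hφ, htend⟩ :=
    hΩbdd.isCompact_closure.tendsto_subseq (fun k => subset_closure (hzΩ k))
  obtain ⟨v, hvopen, hav, f', hf'd, hf'c, hf'eq⟩ := stmt5_patch hρC1 hΩopen ha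
  have hev : ∀ᶠ k in atTop, z (φ k) ∈ v := htend.eventually (hvopen.eventually_mem hav)
  have htendW : Tendsto (fun k => z (φ k)) atTop (nhdsWithin a (closure Ω ∩ v)) := by
    rw [tendsto_nhdsWithin_iff]
    exact ⟨htend, hev.mono fun k hk => ⟨subset_closure (hzΩ (φ k)), hk⟩⟩
  have hnormt : Tendsto (fun k => ‖f' (z (φ k))‖) atTop (nhds ‖f' a‖) :=
    (hf'c.tendsto.comp htendW).norm
  have hlt : ∀ᶠ k in atTop, ‖f' (z (φ k))‖ ≤ ‖f' a‖ + 1 :=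
    hnormt.eventually_le_const (lt_add_one _)
  have hcast : ∀ᶠ k : ℕ in atTop, ‖f' a‖ ≤ (k : ℝ) :=
    tendsto_natCast_atTop_atTop.eventually_ge_atTop ‖f' a‖
  obtain ⟨k, h1, h2, h3⟩ := (hlt.and (hcast.and hev)).exists
  have heq : fderiv ℝ ρ (z (φ k)) = f' (z (φ k)) := hf'eq _ ⟨hzΩ (φ k), h3⟩
  have h4 : (k : ℝ) ≤ (φ k : ℝ) := Nat.cast_le.2 hφ.le_apply
  have h5 := hzn (φ k)
  rw [heq] at h5
  linarith

lemma stmt5_G_small (hΩopen : IsOpen Ω) (hΩbdd : Bornology.IsBounded Ω)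
    {G : EuclideanSpace ℝ (Fin n) → ℝ}
    (hGcont : ContinuousOn G (closure Ω)) (hG0 : ∀ x ∈ frontier Ω, G x = 0)
    (hfne : (frontier Ω).Nonempty)
    {ε : ℝ} (hε : 0 < ε) :
    ∃ r > 0, ∀ z ∈ Ω, infDist z Ωᶜ < r → G z ≤ ε := by
  by_contra hcon
  push_neg at hcon
  have hseq : ∀ k : ℕ, ∃ z, z ∈ Ω ∧ infDist z Ωᶜ < 1 / ((k : ℝ) + 1) ∧ ε < G z := by
    intro k
    obtain ⟨z, hz1, hz2, hz3⟩ := hcon (1 / ((k : ℝ) + 1)) (by positivity)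
    exact ⟨z, hz1, hz2, hz3⟩
  choose z hzΩ hzd hzG using hseq
  obtain ⟨a, ha, φ, hφ, htend⟩ :=
    hΩbdd.isCompact_closure.tendsto_subseq (fun k => subset_closure (hzΩ k))
  have hdist0 : Tendsto (fun k => infDist (z (φ k)) Ωᶜ) atTop (nhds 0) := by
    apply squeeze_zero (fun k => infDist_nonneg) (fun k => (hzd (φ k)).le)
    have h5 : Tendsto (fun k : ℕ => 1 / ((k : ℝ) + 1)) atTop (nhds 0) :=
      tendsto_one_div_add_atTop_nhds_zero_nat
    exact h5.comp hφ.tendsto_atTop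
  have hainf : infDist a Ωᶜ = 0 := by
    have h6 : Tendsto (fun k => infDist (z (φ k)) Ωᶜ) atTop (nhds (infDist a Ωᶜ)) :=
      ((continuous_infDist_pt (Ωᶜ)).tendsto a).comp htend
    exact tendsto_nhds_unique h6 hdist0
  have haf : a ∈ frontier Ω := by
    rw [hΩopen.frontier_eq]
    refine ⟨ha, ?_⟩
    intro haΩ
    obtain ⟨w, hw⟩ := hfne
    have hwc : w ∉ Ω := by
      rw [hΩopen.frontier_eq] at hw
      exact hw.2
    have hne : (Ωᶜ).Nonempty := ⟨w, hwc⟩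
    have hnotin : a ∉ Ωᶜ := by simp [haΩ]
    have hpos := (hΩopen.isClosed_compl.notMem_iff_infDist_pos hne).1 hnotin
    rw [hainf] at hpos
    exact lt_irrefl 0 hpos
  have htendW : Tendsto (fun k => z (φ k)) atTop (nhdsWithin a (closure Ω)) := by
    rw [tendsto_nhdsWithin_iff]
    exact ⟨htend, Eventually.of_forall fun k => subset_closure (hzΩ (φ k))⟩
  have hGt : Tendsto (fun k => G (z (φ k))) atTop (nhds (G a)) :=
    (hGcont a ha).tendsto.comp htendW
  have : ε ≤ G a := ge_of_tendsto hGt (Eventually.of_forall fun k => (hzG (φ k)).le)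
  rw [hG0 a haf] at this
  linarith

lemma stmt5_grad_lower (hΩopen : IsOpen Ω) (hΩbdd : Bornology.IsBounded Ω)
    (hρC1 : ContDiffOn ℝ 1 ρ (closure Ω))
    (hρgrad : ∀ x ∈ frontier Ω, ‖fderivWithin ℝ ρ (closure Ω) x‖ = 1)
    (hfne : (frontier Ω).Nonempty)
    {ε : ℝ} (hε : 0 < ε) :
    ∃ r > 0, ∀ z ∈ Ω, infDist z Ωᶜ < r → 1 - ε ≤ ‖fderiv ℝ ρ z‖ := by
  have hΩne_univ : Ω ≠ univ := by
    intro h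
    rw [h, frontier_univ] at hfne
    exact hfne.ne_empty rfl
  by_contra hcon
  push_neg at hcon
  have hseq : ∀ k : ℕ, ∃ z, z ∈ Ω ∧ infDist z Ωᶜ < 1 / ((k : ℝ) + 1) ∧
      ‖fderiv ℝ ρ z‖ < 1 - ε := by
    intro k
    obtain ⟨z, hz1, hz2, hz3⟩ := hcon (1 / ((k : ℝ) + 1)) (by positivity)
    exact ⟨z, hz1, hz2, hz3⟩
  choose z hzΩ hzd hzg using hseq
  have hy : ∀ k : ℕ, ∃ y ∈ frontier Ω, infDist (z k) Ωᶜ = dist (z k) y :=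
    fun k => exists_mem_frontier_infDist_compl_eq_dist (hzΩ k) hΩne_univ
  choose y hyf hyd using hy
  obtain ⟨a, ha, φ, hφ, htend⟩ :=
    hΩbdd.isCompact_closure.tendsto_subseq (fun k => subset_closure (hzΩ k))
  have hytend : Filter.Tendsto (fun k => y (φ k)) atTop (nhds a) := by
    rw [tendsto_iff_dist_tendsto_zero]
    apply squeeze_zero (fun k => dist_nonneg)
      (g := fun k => 1 / ((φ k : ℝ) + 1) + dist (z (φ k)) a)
    · intro k
      calc dist (y (φ k)) a ≤ dist (y (φ k)) (z (φ k)) + dist (z (φ k)) a := dist_triangle _ _ _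
        _ ≤ 1 / ((φ k : ℝ) + 1) + dist (z (φ k)) a := by
            have h1 : dist (z (φ k)) (y (φ k)) < 1 / ((φ k : ℝ) + 1) := by
              rw [← hyd (φ k)]; exact hzd (φ k)
            rw [dist_comm]
            linarith
    · have h5 : Filter.Tendsto (fun k : ℕ => 1 / ((k : ℝ) + 1)) atTop (nhds 0) :=
        tendsto_one_div_add_atTop_nhds_zero_nat
      have h6 := (h5.comp hφ.tendsto_atTop).add
        (tendsto_iff_dist_tendsto_zero.1 htend)
      simpa using h6
  obtain ⟨v, hvopen, hav, f', hf'd, hf'c, hf'eq⟩ := stmt5_patch hρC1 hΩopen ha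
  have hevz : ∀ᶠ k in atTop, z (φ k) ∈ v := htend.eventually (hvopen.eventually_mem hav)
  have hevy : ∀ᶠ k in atTop, y (φ k) ∈ v := hytend.eventually (hvopen.eventually_mem hav)
  have htendWz : Filter.Tendsto (fun k => z (φ k)) atTop (nhdsWithin a (closure Ω ∩ v)) := by
    rw [tendsto_nhdsWithin_iff]
    exact ⟨htend, hevz.mono fun k hk => ⟨subset_closure (hzΩ (φ k)), hk⟩⟩
  have htendWy : Filter.Tendsto (fun k => y (φ k)) atTop (nhdsWithin a (closure Ω ∩ v)) := by
    rw [tendsto_nhdsWithin_iff]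
    exact ⟨hytend, hevy.mono fun k hk => ⟨frontier_subset_closure (hyf (φ k)), hk⟩⟩
  obtain ⟨w, hw⟩ := hfne
  have hwc : w ∉ Ω := by rw [hΩopen.frontier_eq] at hw; exact hw.2
  have hne : (Ωᶜ).Nonempty := ⟨w, hwc⟩
  have hf'y : ∀ᶠ k in atTop, ‖f' (y (φ k))‖ = 1 := by
    filter_upwards [hevy] with k hk
    have hnotin : z (φ k) ∉ Ωᶜ := by simp [hzΩ (φ k)]
    have hdpos : 0 < dist (z (φ k)) (y (φ k)) := by
      rw [← hyd (φ k)]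
      exact (hΩopen.isClosed_compl.notMem_iff_infDist_pos hne).1 hnotin
    have huniq : UniqueDiffWithinAt ℝ (closure Ω) (y (φ k)) :=
      stmt5_uniqueDiff hΩopen (hzΩ (φ k)) (hyd (φ k)).symm hdpos
    have heq := (hf'd (y (φ k)) ⟨frontier_subset_closure (hyf (φ k)), hk⟩).fderivWithin huniq
    rw [← heq]
    exact hρgrad _ (hyf (φ k))
  have h1 : Filter.Tendsto (fun k => ‖f' (y (φ k))‖) atTop (nhds ‖f' a‖) :=
    (hf'c.tendsto.comp htendWy).norm
  have h1' : Filter.Tendsto (fun _ : ℕ => (1:ℝ)) atTop (nhds ‖f' a‖) :=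
    h1.congr' hf'y
  have hfa : ‖f' a‖ = 1 := tendsto_nhds_unique h1' tendsto_const_nhds
  have h2 : Filter.Tendsto (fun k => ‖f' (z (φ k))‖) atTop (nhds ‖f' a‖) :=
    (hf'c.tendsto.comp htendWz).norm
  have h3 : ∀ᶠ k in atTop, ‖f' (z (φ k))‖ ≤ 1 - ε := by
    filter_upwards [hevz] with k hk
    rw [← hf'eq _ ⟨hzΩ (φ k), hk⟩]
    exact (hzg (φ k)).le
  have h4 : ‖f' a‖ ≤ 1 - ε := le_of_tendsto h2 h3
  rw [hfa] at h4
  linarith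

lemma stmt5_lap_eval (hΩopen : IsOpen Ω)
    (hρC2 : ContDiffOn ℝ 2 ρ Ω) (hρpos : ∀ p ∈ Ω, 0 < ρ p)
    {μ K : ℝ}
    {c : EuclideanSpace ℝ (Fin n)} (hc : c ∉ Ω)
    {x : EuclideanSpace ℝ (Fin n)} (hx : x ∈ Ω) :
    ∑ i, spd (spd (fun y => ‖y - c‖ ^ μ + K * ρ y ^ μ) i) i x
      = μ * ((n:ℝ) + μ - 2) * ‖x - c‖ ^ (μ - 2)
        + K * μ * ((μ - 1) * ρ x ^ (μ - 2) * (∑ i, (spd ρ i x)^2)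
          + ρ x ^ (μ - 1) * (∑ i, spd (spd ρ i) i x)) := by
  classical
  set e : Fin n → EuclideanSpace ℝ (Fin n) := fun i => EuclideanSpace.single i 1 with he
  set u : EuclideanSpace ℝ (Fin n) → ℝ := fun y => ∑ j, (y j - c j) * (y j - c j) with hudef
  set B : EuclideanSpace ℝ (Fin n) → (EuclideanSpace ℝ (Fin n) →L[ℝ] ℝ) := fun y => ∑ j, (2 * (y j - c j)) • EuclideanSpace.proj j with hBdef
  have hu_norm : ∀ y : EuclideanSpace ℝ (Fin n), u y = ‖y - c‖ ^ (2:ℕ) := by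
    intro y
    rw [EuclideanSpace.norm_eq, Real.sq_sqrt (by positivity)]
    refine Finset.sum_congr rfl fun j _ => ?_
    have : (y - c) j = y j - c j := rfl
    rw [this, Real.norm_eq_abs, sq_abs, sq]
  have hxc : x ≠ c := fun h => hc (h ▸ hx)
  have hnormpos : ∀ y : EuclideanSpace ℝ (Fin n), y ≠ c → 0 < ‖y - c‖ := fun y hy =>
    norm_pos_iff.2 (sub_ne_zero.2 hy)
  have hupos : ∀ y : EuclideanSpace ℝ (Fin n), y ≠ c → 0 < u y := by
    intro y hy
    rw [hu_norm y]
    exact pow_pos (hnormpos y hy) 2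
  have hB : ∀ y : EuclideanSpace ℝ (Fin n), HasFDerivAt u (B y) y := by
    intro y
    apply HasFDerivAt.fun_sum
    intro j _
    have h1 : HasFDerivAt (fun y : EuclideanSpace ℝ (Fin n) => y j - c j) (EuclideanSpace.proj j : EuclideanSpace ℝ (Fin n) →L[ℝ] ℝ) y := by
      exact (EuclideanSpace.proj (𝕜 := ℝ) j).hasFDerivAt.sub_const (c j)
    have h2 := h1.mul h1
    rw [two_mul, add_smul]
    exact h2
  have hBe : ∀ y : EuclideanSpace ℝ (Fin n), ∀ i, B y (e i) = 2 * (y i - c i) := by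
    intro y i
    rw [hBdef]
    simp only [ContinuousLinearMap.sum_apply, ContinuousLinearMap.smul_apply]
    have : ∀ j, EuclideanSpace.proj (𝕜 := ℝ) j (e i) = if j = i then (1:ℝ) else 0 := by
      intro j
      rw [he]
      simp [EuclideanSpace.single_apply]
    simp only [this]
    rw [Finset.sum_congr rfl (fun j _ => smul_eq_mul _ _)]
    simp [Finset.sum_ite_eq']
  have hfun : (fun y : EuclideanSpace ℝ (Fin n) => ‖y - c‖ ^ μ + K * ρ y ^ μ)
      = (fun y : EuclideanSpace ℝ (Fin n) => u y ^ (μ/2) + K * ρ y ^ μ) := by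
    funext y
    congr 1
    rw [hu_norm y, ← Real.rpow_natCast (‖y - c‖) 2, ← Real.rpow_mul (norm_nonneg _)]
    norm_num
    congr 1
    ring
  have hdiffρ : ∀ y ∈ Ω, DifferentiableAt ℝ ρ y := fun y hy =>
    ((hρC2 y hy).contDiffAt (hΩopen.mem_nhds hy)).differentiableAt (by norm_num)
  have hmain : ∀ y (hy : y ∈ Ω), HasFDerivAt (fun y => u y ^ (μ/2) + K * ρ y ^ μ)
      (((μ/2) * u y ^ (μ/2 - 1)) • B y + K • ((μ * ρ y ^ (μ - 1)) • fderiv ℝ ρ y)) y := by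
    intro y hy
    have hyc : y ≠ c := fun h => hc (h ▸ hy)
    have h1 := (hB y).rpow_const (p := μ/2) (Or.inl (hupos y hyc).ne')
    have h2 := ((hdiffρ y hy).hasFDerivAt.rpow_const (p := μ)
      (Or.inl (hρpos y hy).ne')).const_mul K
    exact h1.add h2
  have hspd : ∀ i, ∀ y ∈ Ω, spd (fun y => ‖y - c‖ ^ μ + K * ρ y ^ μ) i y
      = μ * (u y ^ (μ/2 - 1) * (y i - c i))
        + (K * μ) * (ρ y ^ (μ - 1) * spd ρ i y) := by
    intro i y hy
    show fderiv ℝ (fun y => ‖y - c‖ ^ μ + K * ρ y ^ μ) y (e i) = _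
    rw [hfun, (hmain y hy).fderiv]
    have : spd ρ i y = fderiv ℝ ρ y (e i) := rfl
    rw [this]
    simp only [ContinuousLinearMap.add_apply, ContinuousLinearMap.smul_apply, smul_eq_mul,
      hBe y i]
    ring
  -- second derivative
  have hC2 : ContDiffAt ℝ 2 ρ x := (hρC2 x hx).contDiffAt (hΩopen.mem_nhds hx)
  have hf1 : ContDiffAt ℝ 1 (fderiv ℝ ρ) x := hC2.fderiv_right (by norm_num)
  have hdiffspd : ∀ i, DifferentiableAt ℝ (spd ρ i) x := by
    intro i
    have hcomp : DifferentiableAt ℝ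
        ((fun A : (EuclideanSpace ℝ (Fin n) →L[ℝ] ℝ) => A (e i)) ∘ (fderiv ℝ ρ)) x :=
      (ContinuousLinearMap.apply ℝ ℝ (e i)).differentiableAt.comp x
        (hf1.differentiableAt one_ne_zero)
    exact hcomp
  have key : ∀ i, spd (spd (fun y => ‖y - c‖ ^ μ + K * ρ y ^ μ) i) i x
      = μ * (u x ^ (μ/2 - 1) * 1 + (x i - c i) * ((μ/2 - 1) * u x ^ (μ/2 - 1 - 1) * (2 * (x i - c i))))
        + (K * μ) * (ρ x ^ (μ - 1) * spd (spd ρ i) i x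
            + spd ρ i x * ((μ - 1) * ρ x ^ (μ - 1 - 1) * spd ρ i x)) := by
    intro i
    have hev : spd (fun y => ‖y - c‖ ^ μ + K * ρ y ^ μ) i =ᶠ[nhds x]
        (fun y => μ * (u y ^ (μ/2 - 1) * (y i - c i))
          + (K * μ) * (ρ y ^ (μ - 1) * spd ρ i y)) :=
      eventually_of_mem (hΩopen.mem_nhds hx) (fun y hy => hspd i y hy)
    have a1 := (hB x).rpow_const (p := μ/2 - 1) (Or.inl (hupos x hxc).ne')
    have a2 : HasFDerivAt (fun y : EuclideanSpace ℝ (Fin n) => y i - c i) (EuclideanSpace.proj i : EuclideanSpace ℝ (Fin n) →L[ℝ] ℝ) x := by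
      exact (EuclideanSpace.proj (𝕜 := ℝ) i).hasFDerivAt.sub_const (c i)
    have b1 := ((hdiffρ x hx).hasFDerivAt).rpow_const (p := μ - 1) (Or.inl (hρpos x hx).ne')
    have b2 : HasFDerivAt (spd ρ i) (fderiv ℝ (spd ρ i) x) x := (hdiffspd i).hasFDerivAt
    have hder := ((a1.mul a2).const_mul μ).add ((b1.mul b2).const_mul (K * μ))
    show fderiv ℝ (spd (fun y => ‖y - c‖ ^ μ + K * ρ y ^ μ) i) x (e i) = _
    have hder' : HasFDerivAt (fun y : EuclideanSpace ℝ (Fin n) => μ * (u y ^ (μ/2 - 1) * (y i - c i))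
        + (K * μ) * (ρ y ^ (μ - 1) * spd ρ i y)) _ x := hder
    rw [hev.fderiv_eq, hder'.fderiv]
    have h3 : spd (spd ρ i) i x = fderiv ℝ (spd ρ i) x (e i) := rfl
    have h4 : spd ρ i x = fderiv ℝ ρ x (e i) := rfl
    rw [h3, h4]
    simp only [ContinuousLinearMap.add_apply, ContinuousLinearMap.smul_apply, smul_eq_mul,
      hBe x i]
    have h5 : EuclideanSpace.proj (𝕜 := ℝ) i (e i) = (1:ℝ) := by
      rw [he]; simp [EuclideanSpace.single_apply]
    rw [h5]
    try ring
  -- sum up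
  rw [Finset.sum_congr rfl (fun i _ => key i)]
  rw [Finset.sum_add_distrib, ← Finset.mul_sum, ← Finset.mul_sum]
  have hsq : ∀ i : Fin n, (x i - c i) * ((μ/2 - 1) * u x ^ (μ/2 - 1 - 1) * (2 * (x i - c i)))
      = (μ - 2) * u x ^ (μ/2 - 2) * ((x i - c i) * (x i - c i)) := by
    intro i
    have : μ/2 - 1 - 1 = μ/2 - 2 := by ring
    rw [this]; ring
  have hsum1 : ∑ i, (u x ^ (μ/2 - 1) * 1
      + (x i - c i) * ((μ/2 - 1) * u x ^ (μ/2 - 1 - 1) * (2 * (x i - c i))))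
      = (n:ℝ) * u x ^ (μ/2 - 1) + (μ - 2) * u x ^ (μ/2 - 2) * u x := by
    rw [Finset.sum_add_distrib]
    congr 1
    · simp [mul_one]
    · rw [Finset.sum_congr rfl (fun i _ => hsq i), ← Finset.mul_sum]
      try rw [hudef]
  have h6 : u x ^ (μ/2 - 2) * u x = u x ^ (μ/2 - 1) := by
    rw [← Real.rpow_add_one (hupos x hxc).ne' (μ/2 - 2)]
    congr 1
    ring
  have hupow : (μ - 2) * u x ^ (μ/2 - 2) * u x = (μ - 2) * u x ^ (μ/2 - 1) := by
    rw [mul_assoc, h6]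
  have hnorm_eq : u x ^ (μ/2 - 1) = ‖x - c‖ ^ (μ - 2) := by
    rw [hu_norm x, ← Real.rpow_natCast (‖x - c‖) 2, ← Real.rpow_mul (norm_nonneg _)]
    congr 1
    push_cast
    ring
  have hsum2 : ∑ i, (ρ x ^ (μ - 1) * spd (spd ρ i) i x
      + spd ρ i x * ((μ - 1) * ρ x ^ (μ - 1 - 1) * spd ρ i x))
      = ρ x ^ (μ - 1) * (∑ i, spd (spd ρ i) i x)
        + (μ - 1) * ρ x ^ (μ - 2) * (∑ i, (spd ρ i x)^2) := by
    rw [Finset.sum_add_distrib, ← Finset.mul_sum]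
    congr 1
    have h8 : μ - 1 - 1 = μ - 2 := by ring
    rw [Finset.sum_congr rfl (fun i _ => by rw [h8]; ring : ∀ i ∈ Finset.univ, spd ρ i x * ((μ - 1) * ρ x ^ (μ - 1 - 1) * spd ρ i x) = (μ - 1) * ρ x ^ (μ - 2) * (spd ρ i x)^2)]
    rw [← Finset.mul_sum]
  rw [hsum1, hupow, hnorm_eq, hsum2]
  ring


end Stmt5Aux

/-- For `μ ∈ (0,1)` there exist `r, K > 0` such that
`Δ(|x-x₀|^μ + K ρ(x)^μ) ≤ 0` for every `x₀ ∈ ∂Ω` and `x ∈ Ω ∩ B_r(x₀)`. -/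
theorem stmt_5 {n : ℕ}
    (μ : ℝ) (hμ : μ ∈ Ioo (0:ℝ) 1)
    (Ω : Set (EuclideanSpace ℝ (Fin n)))
    (hΩopen : IsOpen Ω) (hΩbdd : Bornology.IsBounded Ω) (hΩne : Ω.Nonempty)
    (ρ : EuclideanSpace ℝ (Fin n) → ℝ)
    (hρC1 : ContDiffOn ℝ 1 ρ (closure Ω))
    (hρC2 : ContDiffOn ℝ 2 ρ Ω)
    (hρpos : ∀ x ∈ Ω, 0 < ρ x)
    (hρ0 : ∀ x ∈ frontier Ω, ρ x = 0)
    -- `|∇ρ| = 1` on `∂Ω`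
    (hρgrad : ∀ x ∈ frontier Ω, ‖fderivWithin ℝ ρ (closure Ω) x‖ = 1)
    -- `ρ ∇²ρ` extends continuously to `closure Ω` and vanishes on `∂Ω`
    (hρhess : ∀ i j, ∃ g : EuclideanSpace ℝ (Fin n) → ℝ,
      ContinuousOn g (closure Ω) ∧
      (∀ x ∈ Ω, g x = ρ x * spd (spd ρ j) i x) ∧
      (∀ x ∈ frontier Ω, g x = 0)) :
    ∃ r > 0, ∃ K > 0, ∀ x0 ∈ frontier Ω, ∀ x ∈ Ω ∩ Metric.ball x0 r,
      (∑ i, spd (spd (fun y => ‖y - x0‖ ^ μ + K * ρ y ^ μ) i) i x) ≤ 0 := by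
  obtain ⟨hμ0, hμ1⟩ := hμ
  by_cases hfne : (frontier Ω).Nonempty
  swap
  · exact ⟨1, one_pos, 1, one_pos,
      fun x0 hx0 => absurd (⟨x0, hx0⟩ : (frontier Ω).Nonempty) hfne⟩
  have hΩne_univ : Ω ≠ univ := by
    intro h
    rw [h, frontier_univ] at hfne
    exact hfne.ne_empty rfl
  have hdiffρ : ∀ p ∈ Ω, DifferentiableAt ℝ ρ p := fun p hp =>
    ((hρC2 p hp).contDiffAt (hΩopen.mem_nhds hp)).differentiableAt (by norm_num)
  obtain ⟨L, hL1, hLbd⟩ := stmt5_grad_bound hΩopen hΩbdd hρC1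
  have hL0 : (0:ℝ) < L := by linarith
  -- the continuous extension of ρ Δρ
  choose g hg1 hg2 hg3 using hρhess
  set G : EuclideanSpace ℝ (Fin n) → ℝ := fun p => ∑ i, g i i p with hGdef
  have hGc : ContinuousOn G (closure Ω) := by
    apply continuousOn_finset_sum
    intro i _
    exact hg1 i i
  have hGΩ : ∀ p ∈ Ω, G p = ρ p * ∑ i, spd (spd ρ i) i p := by
    intro p hp
    rw [hGdef]
    simp only
    rw [Finset.mul_sum]
    exact Finset.sum_congr rfl fun i _ => hg2 i i p hp
  have hG0 : ∀ p ∈ frontier Ω, G p = 0 := by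
    intro p hp
    rw [hGdef]
    simp only
    rw [Finset.sum_congr rfl fun i _ => hg3 i i p hp]
    simp
  obtain ⟨r1, hr1, hP1⟩ := stmt5_grad_lower hΩopen hΩbdd hρC1 hρgrad hfne
    (ε := 1/8) (by norm_num)
  obtain ⟨r2, hr2, hP2⟩ := stmt5_G_small hΩopen hΩbdd hGc hG0 hfne
    (ε := (1-μ)/4) (by linarith)
  set K : ℝ := 2 * (n:ℝ) * L ^ ((2:ℝ) - μ) / (1 - μ) + 1 with hKdef
  have hK0 : 0 < K := by
    have h1 : (0:ℝ) ≤ 2 * (n:ℝ) * L ^ ((2:ℝ) - μ) / (1 - μ) :=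
      div_nonneg (by positivity) (by linarith)
    rw [hKdef]
    linarith
  refine ⟨min r1 r2, lt_min hr1 hr2, K, hK0, ?_⟩
  intro x0 hx0 x hx
  obtain ⟨hxΩ, hxb⟩ := hx
  have hx0c : x0 ∉ Ω := by rw [hΩopen.frontier_eq] at hx0; exact hx0.2
  have hx0cc : x0 ∈ Ωᶜ := hx0c
  have hxb' : dist x x0 < min r1 r2 := mem_ball.1 hxb
  have hinf : infDist x Ωᶜ ≤ dist x x0 := infDist_le_dist_of_mem hx0cc
  have hd1 : infDist x Ωᶜ < r1 := lt_of_le_of_lt hinf (lt_of_lt_of_le hxb' (min_le_left _ _))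
  have hd2 : infDist x Ωᶜ < r2 := lt_of_le_of_lt hinf (lt_of_lt_of_le hxb' (min_le_right _ _))
  have hS : 1 - 1/8 ≤ ‖fderiv ℝ ρ x‖ := hP1 x hxΩ hd1
  have hT : G x ≤ (1-μ)/4 := hP2 x hxΩ hd2
  -- ρ x ≤ L * ‖x - x0‖
  obtain ⟨y, hyf, hyd⟩ := exists_mem_frontier_infDist_compl_eq_dist hxΩ hΩne_univ
  have hρley : ρ x ≤ L * dist x y :=
    stmt5_rho_le_dist hΩopen hρC1 hρ0 hρgrad hdiffρ hL1 hLbd hxΩ hyf hyd.symm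
  have hρle : ρ x ≤ L * ‖x - x0‖ := by
    have h1 : dist x y ≤ dist x x0 := by rw [← hyd]; exact hinf
    have h2 : L * dist x y ≤ L * dist x x0 := by
      apply mul_le_mul_of_nonneg_left h1 hL0.le
    rw [show ‖x - x0‖ = dist x x0 from (dist_eq_norm x x0).symm]
    linarith
  -- evaluate the Laplacian
  rw [stmt5_lap_eval hΩopen hρC2 hρpos hx0c hxΩ]
  have hxne : x ≠ x0 := fun h => hx0c (h ▸ hxΩ)
  have hA0 : (0:ℝ) < ‖x - x0‖ := norm_pos_iff.2 (sub_ne_zero.2 hxne)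
  have hρx : 0 < ρ x := hρpos x hxΩ
  set A : ℝ := ‖x - x0‖ with hAdef
  set P : ℝ := A ^ (μ - 2) with hPdef
  set Q : ℝ := ρ x ^ (μ - 2) with hQdef
  set S : ℝ := ∑ i, (spd ρ i x)^2 with hSdef
  have hP0 : 0 < P := Real.rpow_pos_of_pos hA0 _
  have hQ0 : 0 < Q := Real.rpow_pos_of_pos hρx _
  -- lower bound for S
  have hSsum : (3:ℝ)/4 ≤ S := by
    have h1 : S = ‖fderiv ℝ ρ x‖^2 := by
      rw [hSdef]
      exact stmt5_sum_sq_single (fderiv ℝ ρ x)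
    rw [h1]
    nlinarith [hS, norm_nonneg (fderiv ℝ ρ x)]
  -- rewrite the hessian trace term
  have hTx : ρ x ^ (μ - 1) * (∑ i, spd (spd ρ i) i x) = Q * G x := by
    rw [hGΩ x hxΩ, hQdef, ← mul_assoc]
    congr 1
    rw [← Real.rpow_add_one hρx.ne' (μ - 2)]
    congr 1
    ring
  rw [hTx]
  -- the bracket bound
  have hbr : (μ - 1) * S + G x ≤ (μ - 1)/2 := by nlinarith [hSsum, hT]
  have hQP : L ^ (μ - 2) * P ≤ Q := by
    have h1 : (L * A) ^ (μ - 2) ≤ ρ x ^ (μ - 2) :=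
      Real.rpow_le_rpow_of_nonpos hρx hρle (by linarith)
    rw [Real.mul_rpow hL0.le (by positivity)] at h1
    rw [hPdef, hQdef]
    exact h1
  have hKey : (n:ℝ) ≤ K * ((1 - μ)/2) * L ^ (μ - 2) := by
    have hLL : L ^ ((2:ℝ) - μ) * L ^ (μ - 2) = 1 := by
      rw [← Real.rpow_add hL0]
      norm_num
    have e1 : K * ((1 - μ)/2) * L ^ (μ - 2)
        = (n:ℝ) * (L ^ ((2:ℝ) - μ) * L ^ (μ - 2)) + ((1 - μ)/2) * L ^ (μ - 2) := by
      rw [hKdef]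
      have hμne : (1:ℝ) - μ ≠ 0 := by linarith
      field_simp
    rw [e1, hLL, mul_one]
    have h2 : 0 < ((1 - μ)/2) * L ^ (μ - 2) := by
      have := Real.rpow_pos_of_pos hL0 (μ - 2)
      have h3 : (0:ℝ) < (1 - μ)/2 := by linarith
      exact mul_pos h3 this
    linarith
  -- final chain
  have t1 : (μ - 1) * Q * S + Q * G x = Q * ((μ - 1) * S + G x) := by ring
  have t2 : Q * ((μ - 1) * S + G x) ≤ Q * ((μ - 1)/2) :=
    mul_le_mul_of_nonneg_left hbr hQ0.le
  have t3 : Q * ((μ - 1)/2) ≤ (L ^ (μ - 2) * P) * ((μ - 1)/2) := by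
    apply mul_le_mul_of_nonpos_right hQP
    linarith
  have t4 : (μ - 1) * Q * S + Q * G x ≤ (L ^ (μ - 2) * P) * ((μ - 1)/2) := by
    rw [t1]; exact le_trans t2 t3
  have t5 : K * μ * ((μ - 1) * Q * S + Q * G x)
      ≤ K * μ * ((L ^ (μ - 2) * P) * ((μ - 1)/2)) := by
    apply mul_le_mul_of_nonneg_left t4
    positivity
  have t6 : μ * ((n:ℝ) + μ - 2) * P + K * μ * ((L ^ (μ - 2) * P) * ((μ - 1)/2)) ≤ 0 := by
    have expand : μ * ((n:ℝ) + μ - 2) * P + K * μ * ((L ^ (μ - 2) * P) * ((μ - 1)/2))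
        = μ * P * (((n:ℝ) + μ - 2) - K * ((1 - μ)/2) * L ^ (μ - 2)) := by ring
    rw [expand]
    have h9 : ((n:ℝ) + μ - 2) - K * ((1 - μ)/2) * L ^ (μ - 2) ≤ 0 := by linarith
    have h10 : (0:ℝ) ≤ μ * P := by positivity
    exact mul_nonpos_iff.2 (Or.inl ⟨h10, h9⟩)
  have t7 := add_le_add_left t5 (μ * ((n:ℝ) + μ - 2) * P)
  exact le_trans (by linarith [t7]) t6


end
end

section
/- Let $c, f$ be bounded continuous functions on $S = \partial\Omega\times[0,\infty)$, $\bar c,\bar f,\phi$ continuous on $\partial\Omega$ with $\bar c < 0$ on $\partial\Omega$, and define $h(x,t) = \phi(x)e^{\int_0^t c(x,s)ds} - \int_0^t e^{\int_s^t c(x,\tau)d\tau} f(x,s)\,ds$. If $c(\cdot,t)\to\bar c$ and $f(\cdot,t)\to\bar f$ in $L^\infty(\partial\Omega)$ as $t\to\infty$, then $h(\cdot,t)\to \bar f/\bar c$ in $L^\infty(\partial\Omega)$ as $t\to\infty$. -/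
open Set intervalIntegral MeasureTheory Filter

noncomputable section


lemma contF (g : ℝ → ℝ) (hg : Continuous g) (t : ℝ) :
    Continuous fun s => Real.exp (∫ τ in s..t, g τ) := by
  apply Real.continuous_exp.comp
  have h1 : Continuous fun s => ∫ τ in t..s, g τ :=
    intervalIntegral.continuous_primitive (fun a b => hg.intervalIntegrable a b) t
  have : (fun s => ∫ τ in s..t, g τ) = fun s => -(∫ τ in t..s, g τ) := by
    funext s; rw [intervalIntegral.integral_symm]
  rw [this]; exact h1.neg

lemma hasDerivF (g : ℝ → ℝ) (hg : Continuous g) (t s : ℝ) :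
    HasDerivAt (fun u => Real.exp (∫ τ in u..t, g τ))
      (Real.exp (∫ τ in s..t, g τ) * (-(g s))) s := by
  have h1 : HasDerivAt (fun u => ∫ τ in t..u, g τ) (g s) s :=
    intervalIntegral.integral_hasDerivAt_right (hg.intervalIntegrable _ _)
      (hg.stronglyMeasurableAtFilter _ _) hg.continuousAt
  have h2 : HasDerivAt (fun u => ∫ τ in u..t, g τ) (-(g s)) s := by
    have h3 := h1.neg
    have : (fun u => ∫ τ in u..t, g τ) = fun u => -(∫ τ in t..u, g τ) := by
      funext u; rw [intervalIntegral.integral_symm]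
    rw [this]; exact h3
  exact h2.exp

lemma key_ident (g : ℝ → ℝ) (hg : Continuous g) (t : ℝ) :
    (∫ s in (0:ℝ)..t, g s * Real.exp (∫ τ in s..t, g τ))
      = Real.exp (∫ τ in (0:ℝ)..t, g τ) - 1 := by
  have hFc : Continuous fun s => Real.exp (∫ τ in s..t, g τ) := contF g hg t
  have hint : IntervalIntegrable
      (fun s => Real.exp (∫ τ in s..t, g τ) * (-(g s))) volume 0 t :=
    (hFc.mul hg.neg).intervalIntegrable _ _
  have := intervalIntegral.integral_eq_sub_of_hasDerivAt
    (f := fun u => Real.exp (∫ τ in u..t, g τ))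
    (f' := fun s => Real.exp (∫ τ in s..t, g τ) * (-(g s)))
    (fun s _ => hasDerivF g hg t s) hint
  have h2 : (∫ s in (0:ℝ)..t, Real.exp (∫ τ in s..t, g τ) * (-(g s)))
      = 1 - Real.exp (∫ τ in (0:ℝ)..t, g τ) := by
    rw [this]; simp
  have h3 : (∫ s in (0:ℝ)..t, g s * Real.exp (∫ τ in s..t, g τ))
      = -(∫ s in (0:ℝ)..t, Real.exp (∫ τ in s..t, g τ) * (-(g s))) := by
    rw [← intervalIntegral.integral_neg]
    congr 1; funext s; ring
  rw [h3, h2]; ring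

lemma exp_int_le (k a b : ℝ) (hk : 0 < k) (hab : a ≤ b) :
    (∫ s in a..b, Real.exp (k * (s - b))) ≤ 1 / k := by
  have hder : ∀ s : ℝ, HasDerivAt (fun u => Real.exp (k * (u - b)) / k)
      (Real.exp (k * (s - b))) s := by
    intro s
    have h1 : HasDerivAt (fun u : ℝ => k * (u - b)) k s := by
      simpa using ((hasDerivAt_id s).sub_const b).const_mul k
    have h2 := (h1.exp).div_const k
    simpa [mul_div_assoc, mul_div_cancel_right₀ _ (ne_of_gt hk)] using h2
  have hint : IntervalIntegrable (fun s => Real.exp (k * (s - b))) volume a b :=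
    (Real.continuous_exp.comp (by continuity)).intervalIntegrable _ _
  rw [intervalIntegral.integral_eq_sub_of_hasDerivAt (fun s _ => hder s) hint]
  have h1 : Real.exp (k * (b - b)) = 1 := by simp
  rw [h1]
  have h2 : 0 < Real.exp (k * (a - b)) / k := by positivity
  linarith


lemma core (g p : ℝ → ℝ) (hg : Continuous g) (hp : Continuous p)
    (M k T₁ δ φx r : ℝ) (hk : 0 < k) (hT₁ : 0 ≤ T₁) (hM : 0 ≤ M)
    (hgM : ∀ s, |g s| ≤ M) (hpM : ∀ s, |p s| ≤ M)
    (hgneg : ∀ s, T₁ ≤ s → g s ≤ -k)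
    (hδ : ∀ s, T₁ ≤ s → |p s - r * g s| ≤ δ)
    (t : ℝ) (ht : T₁ ≤ t) :
    |φx * Real.exp (∫ s in (0:ℝ)..t, g s)
      - (∫ s in (0:ℝ)..t, Real.exp (∫ τ in s..t, g τ) * p s) - r|
      ≤ (|φx| + |r| + T₁ * (M + |r| * M)) * Real.exp (M * T₁ - k * (t - T₁)) + δ / k := by
  have ht0 : (0:ℝ) ≤ t := le_trans hT₁ ht
  have hδ0 : (0:ℝ) ≤ δ := le_trans (abs_nonneg _) (hδ t ht)
  set F : ℝ → ℝ := fun s => Real.exp (∫ τ in s..t, g τ) with hFdef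
  have hFc : Continuous F := contF g hg t
  set Q : ℝ := Real.exp (M * T₁ - k * (t - T₁)) with hQdef
  -- bound on ∫ s..t g for T₁ ≤ s ≤ t
  have hB1 : ∀ s, T₁ ≤ s → s ≤ t → (∫ τ in s..t, g τ) ≤ -k * (t - s) := by
    intro s hs hst
    have h1 : (∫ τ in s..t, g τ) ≤ ∫ τ in s..t, (-k : ℝ) := by
      apply intervalIntegral.integral_mono_on hst (hg.intervalIntegrable _ _)
        (_root_.intervalIntegrable_const (μ := volume))
      intro τ hτ; exact hgneg τ (le_trans hs hτ.1)
    simpa [mul_comm] using h1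
  have hB2 : ∀ s, 0 ≤ s → s ≤ T₁ → (∫ τ in s..t, g τ) ≤ M * T₁ - k * (t - T₁) := by
    intro s hs hsT
    have hadj : (∫ τ in s..t, g τ)
        = (∫ τ in s..T₁, g τ) + ∫ τ in T₁..t, g τ :=
      (intervalIntegral.integral_add_adjacent_intervals (hg.intervalIntegrable _ _)
        (hg.intervalIntegrable _ _)).symm
    have h1 : (∫ τ in s..T₁, g τ) ≤ M * (T₁ - s) := by
      have := intervalIntegral.integral_mono_on hsT (hg.intervalIntegrable s T₁)
        (_root_.intervalIntegrable_const (μ := volume) (c := M)) (fun τ _ => le_trans (le_abs_self _) (hgM τ))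
      simpa [mul_comm] using this
    have h2 := hB1 T₁ le_rfl ht
    have h3 : M * (T₁ - s) ≤ M * T₁ := by nlinarith
    rw [hadj]; linarith
  have hFQ : ∀ s, 0 ≤ s → s ≤ T₁ → F s ≤ Q := fun s hs hsT =>
    Real.exp_le_exp.2 (hB2 s hs hsT)
  have hQpos : 0 < Q := Real.exp_pos _
  -- key identity rearrangement
  have hkey := key_ident g hg t
  have hintFp : IntervalIntegrable (fun s => F s * p s) volume 0 t :=
    (hFc.mul hp).intervalIntegrable _ _
  have hintgF : IntervalIntegrable (fun s => g s * F s) volume 0 t :=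
    (hg.mul hFc).intervalIntegrable _ _
  have hintmix : ∀ a b : ℝ, IntervalIntegrable (fun s => F s * (p s - r * g s)) volume a b :=
    fun a b => (hFc.mul (hp.sub (continuous_const.mul hg))).intervalIntegrable _ _
  have hsplit : (∫ s in (0:ℝ)..t, F s * (p s - r * g s))
      = (∫ s in (0:ℝ)..t, F s * p s) - r * (Real.exp (∫ τ in (0:ℝ)..t, g τ) - 1) := by
    have e1 : (fun s => F s * (p s - r * g s))
        = fun s => F s * p s - r * (g s * F s) := by funext s; ring
    rw [e1, intervalIntegral.integral_sub hintFp (hintgF.const_mul r),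
      intervalIntegral.integral_const_mul, hkey]
  have hmain : φx * Real.exp (∫ s in (0:ℝ)..t, g s)
      - (∫ s in (0:ℝ)..t, F s * p s) - r
      = (φx - r) * Real.exp (∫ s in (0:ℝ)..t, g s)
        - (∫ s in (0:ℝ)..t, F s * (p s - r * g s)) := by
    rw [hsplit]; ring
  have hadj2 : (∫ s in (0:ℝ)..t, F s * (p s - r * g s))
      = (∫ s in (0:ℝ)..T₁, F s * (p s - r * g s))
        + ∫ s in T₁..t, F s * (p s - r * g s) :=
    (intervalIntegral.integral_add_adjacent_intervals (hintmix _ _) (hintmix _ _)).symm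
  -- bound I1
  have hI1 : |∫ s in (0:ℝ)..T₁, F s * (p s - r * g s)| ≤ T₁ * ((M + |r| * M) * Q) := by
    calc |∫ s in (0:ℝ)..T₁, F s * (p s - r * g s)|
        ≤ ∫ s in (0:ℝ)..T₁, |F s * (p s - r * g s)| :=
          intervalIntegral.abs_integral_le_integral_abs hT₁
      _ ≤ ∫ s in (0:ℝ)..T₁, (M + |r| * M) * Q := by
          apply intervalIntegral.integral_mono_on hT₁
            ((hFc.mul (hp.sub (continuous_const.mul hg))).abs.intervalIntegrable _ _)
            (_root_.intervalIntegrable_const (μ := volume))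
          intro s hs
          show |F s * (p s - r * g s)| ≤ _
          rw [abs_mul]
          have h1 : |F s| = F s := abs_of_pos (Real.exp_pos _)
          have h2 : |p s - r * g s| ≤ M + |r| * M := by
            calc |p s - r * g s| ≤ |p s| + |r * g s| := abs_sub _ _
              _ ≤ M + |r| * M := by
                  rw [abs_mul]
                  exact add_le_add (hpM s) (mul_le_mul_of_nonneg_left (hgM s) (abs_nonneg r))
          rw [h1]
          have := mul_le_mul (hFQ s hs.1 hs.2) h2 (abs_nonneg _) (le_of_lt hQpos)
          linarith [this]
      _ = T₁ * ((M + |r| * M) * Q) := by simp; ring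
  -- bound I2
  have hI2 : |∫ s in T₁..t, F s * (p s - r * g s)| ≤ δ / k := by
    have step1 : |∫ s in T₁..t, F s * (p s - r * g s)|
        ≤ ∫ s in T₁..t, δ * Real.exp (k * (s - t)) := by
      calc |∫ s in T₁..t, F s * (p s - r * g s)|
          ≤ ∫ s in T₁..t, |F s * (p s - r * g s)| :=
            intervalIntegral.abs_integral_le_integral_abs ht
        _ ≤ ∫ s in T₁..t, δ * Real.exp (k * (s - t)) := by
            apply intervalIntegral.integral_mono_on ht
              ((hFc.mul (hp.sub (continuous_const.mul hg))).abs.intervalIntegrable _ _)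
              ((continuous_const.mul (Real.continuous_exp.comp
                (by continuity))).intervalIntegrable _ _)
            intro s hs
            show |F s * (p s - r * g s)| ≤ δ * Real.exp (k * (s - t))
            rw [abs_mul, abs_of_pos (Real.exp_pos _)]
            have hF : F s ≤ Real.exp (k * (s - t)) := by
              apply Real.exp_le_exp.2
              have := hB1 s hs.1 hs.2
              linarith [this]
            have hd := hδ s hs.1
            calc F s * |p s - r * g s| ≤ Real.exp (k * (s - t)) * δ :=
                  mul_le_mul hF hd (abs_nonneg _) (le_of_lt (Real.exp_pos _))
              _ = δ * Real.exp (k * (s - t)) := mul_comm _ _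
    have step2 : (∫ s in T₁..t, δ * Real.exp (k * (s - t))) ≤ δ / k := by
      rw [intervalIntegral.integral_const_mul]
      calc δ * ∫ s in T₁..t, Real.exp (k * (s - t))
          ≤ δ * (1 / k) := mul_le_mul_of_nonneg_left (exp_int_le k T₁ t hk ht) hδ0
        _ = δ / k := by ring
    linarith
  -- bound leading term
  have hlead : |(φx - r) * Real.exp (∫ s in (0:ℝ)..t, g s)| ≤ (|φx| + |r|) * Q := by
    rw [abs_mul, abs_of_pos (Real.exp_pos _)]
    have h1 : |φx - r| ≤ |φx| + |r| := abs_sub _ _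
    have h2 : Real.exp (∫ s in (0:ℝ)..t, g s) ≤ Q :=
      Real.exp_le_exp.2 (hB2 0 le_rfl hT₁)
    exact mul_le_mul h1 h2 (le_of_lt (Real.exp_pos _)) (by positivity)
  rw [hmain, hadj2]
  calc |(φx - r) * Real.exp (∫ s in (0:ℝ)..t, g s)
        - ((∫ s in (0:ℝ)..T₁, F s * (p s - r * g s))
          + ∫ s in T₁..t, F s * (p s - r * g s))|
      ≤ |(φx - r) * Real.exp (∫ s in (0:ℝ)..t, g s)|
        + (|∫ s in (0:ℝ)..T₁, F s * (p s - r * g s)|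
          + |∫ s in T₁..t, F s * (p s - r * g s)|) :=
        le_trans (abs_sub _ _) (by gcongr; exact abs_add_le _ _)
    _ ≤ (|φx| + |r|) * Q + (T₁ * ((M + |r| * M) * Q) + δ / k) :=
        add_le_add hlead (add_le_add hI1 hI2)
    _ = (|φx| + |r| + T₁ * (M + |r| * M)) * Q + δ / k := by ring


set_option maxHeartbeats 1000000 in
/-- Convergence of the boundary values: if `c(·,t) → c̄` and `f(·,t) → f̄` in
`L^∞(∂Ω)` with `c̄ < 0` on `∂Ω`, then `h(·,t) → f̄/c̄` in `L^∞(∂Ω)` as `t → ∞`. -/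
theorem stmt_7 {n : ℕ}
    (Ω : Set (EuclideanSpace ℝ (Fin n)))
    (hΩopen : IsOpen Ω) (hΩbdd : Bornology.IsBounded Ω) (hΩne : Ω.Nonempty)
    (c f : EuclideanSpace ℝ (Fin n) → ℝ → ℝ)
    (cbar fbar φ : EuclideanSpace ℝ (Fin n) → ℝ)
    (hcCont : ContinuousOn (fun p : EuclideanSpace ℝ (Fin n) × ℝ => c p.1 p.2)
      ((frontier Ω) ×ˢ Ici 0))
    (hfCont : ContinuousOn (fun p : EuclideanSpace ℝ (Fin n) × ℝ => f p.1 p.2)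
      ((frontier Ω) ×ˢ Ici 0))
    (M : ℝ)
    (hbd : ∀ x ∈ frontier Ω, ∀ t : ℝ, 0 ≤ t → |c x t| ≤ M ∧ |f x t| ≤ M)
    (hcbar : ContinuousOn cbar (frontier Ω))
    (hfbar : ContinuousOn fbar (frontier Ω))
    (hφ : ContinuousOn φ (frontier Ω))
    (hcbarneg : ∀ x ∈ frontier Ω, cbar x < 0)
    (hcconv : ∀ ε > 0, ∃ T : ℝ, ∀ t ≥ T, ∀ x ∈ frontier Ω, |c x t - cbar x| ≤ ε)
    (hfconv : ∀ ε > 0, ∃ T : ℝ, ∀ t ≥ T, ∀ x ∈ frontier Ω, |f x t - fbar x| ≤ ε)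
    (h : EuclideanSpace ℝ (Fin n) → ℝ → ℝ)
    (hdef : ∀ x t, h x t = φ x * Real.exp (∫ s in (0:ℝ)..t, c x s)
      - ∫ s in (0:ℝ)..t, Real.exp (∫ τ in s..t, c x τ) * f x s) :
    ∀ ε > 0, ∃ T : ℝ, ∀ t ≥ T, ∀ x ∈ frontier Ω,
      |h x t - fbar x / cbar x| ≤ ε := by
  intro ε hε
  by_cases hne : (frontier Ω).Nonempty
  swap
  · exact ⟨0, fun t _ x hx => absurd ⟨x, hx⟩ hne⟩
  have hK : IsCompact (frontier Ω) :=
    Metric.isCompact_of_isClosed_isBounded isClosed_frontier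
      (hΩbdd.closure.subset frontier_subset_closure)
  obtain ⟨x₀, hx₀, hx₀max'⟩ := hK.exists_isMaxOn hne hcbar
  have hx₀max : ∀ x ∈ frontier Ω, cbar x ≤ cbar x₀ := fun x hx => isMaxOn_iff.1 hx₀max' x hx
  set c₀ : ℝ := -cbar x₀ with hc₀def
  have hc₀ : 0 < c₀ := by have := hcbarneg x₀ hx₀; simp only [hc₀def]; linarith
  have hle : ∀ x ∈ frontier Ω, cbar x ≤ -c₀ := by
    intro x hx; have := hx₀max x hx; simp only [hc₀def]; linarith
  have hM0 : 0 ≤ M := le_trans (abs_nonneg _) (hbd x₀ hx₀ 0 le_rfl).1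
  -- bounds on cbar, fbar
  obtain ⟨Tc1, hTc1⟩ := hcconv 1 one_pos
  have hcbarbd : ∀ x ∈ frontier Ω, |cbar x| ≤ M + 1 := by
    intro x hx
    have h1 := hTc1 (max Tc1 0) (le_max_left _ _) x hx
    have h2 := (hbd x hx (max Tc1 0) (le_max_right _ _)).1
    have h3 : |cbar x| - |c x (max Tc1 0)| ≤ |c x (max Tc1 0) - cbar x| := by
      rw [abs_sub_comm]; exact abs_sub_abs_le_abs_sub _ _
    linarith
  obtain ⟨Tf1, hTf1⟩ := hfconv 1 one_pos
  have hfbarbd : ∀ x ∈ frontier Ω, |fbar x| ≤ M + 1 := by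
    intro x hx
    have h1 := hTf1 (max Tf1 0) (le_max_left _ _) x hx
    have h2 := (hbd x hx (max Tf1 0) (le_max_right _ _)).2
    have h3 : |fbar x| - |f x (max Tf1 0)| ≤ |f x (max Tf1 0) - fbar x| := by
      rw [abs_sub_comm]; exact abs_sub_abs_le_abs_sub _ _
    linarith
  obtain ⟨xφ, hxφ, hΦmax'⟩ := hK.exists_isMaxOn hne hφ.abs
  have hΦmax : ∀ x ∈ frontier Ω, |φ x| ≤ |φ xφ| := fun x hx => isMaxOn_iff.1 hΦmax' x hx
  set Φ : ℝ := |φ xφ| with hΦdef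
  have hΦ0 : 0 ≤ Φ := abs_nonneg _
  set R : ℝ := (M + 1) / c₀ with hRdef
  have hR0 : 0 ≤ R := by positivity
  have hrbd : ∀ x ∈ frontier Ω, |fbar x / cbar x| ≤ R := by
    intro x hx
    have h1 : c₀ ≤ |cbar x| := by
      have := hle x hx
      rw [abs_of_neg (hcbarneg x hx)]; linarith
    rw [abs_div]
    exact div_le_div₀ (by linarith) (hfbarbd x hx) hc₀ h1
  set k : ℝ := c₀ / 2 with hkdef
  have hk : 0 < k := by positivity
  set δ₁ : ℝ := min (c₀ / 2) (ε * k / (4 * (R + 1))) with hδ₁def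
  have hδ₁pos : 0 < δ₁ := by
    apply lt_min (by positivity)
    positivity
  set δ₂ : ℝ := ε * k / 4 with hδ₂def
  have hδ₂pos : 0 < δ₂ := by positivity
  obtain ⟨Tc', hTc'⟩ := hcconv δ₁ hδ₁pos
  obtain ⟨Tf', hTf'⟩ := hfconv δ₂ hδ₂pos
  set T₁ : ℝ := max (max Tc' Tf') 0 with hT₁def
  have hT₁0 : 0 ≤ T₁ := le_max_right _ _
  set C : ℝ := Φ + R + T₁ * (M + R * M) with hCdef
  -- eventual smallness of the exponential term
  have htend : Tendsto (fun t : ℝ => C * Real.exp (M * T₁ - k * (t - T₁)))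
      atTop (nhds 0) := by
    have h1 : Tendsto (fun t : ℝ => (-k) * t) atTop atBot :=
      (tendsto_const_mul_atBot_of_neg (by linarith)).2 tendsto_id
    have h2 : Tendsto (fun t : ℝ => M * T₁ - k * (t - T₁)) atTop atBot := by
      have h3 := tendsto_atBot_add_const_right atTop (M * T₁ + k * T₁) h1
      refine h3.congr fun t => by ring
    have h4 := (Real.tendsto_exp_atBot.comp h2).const_mul C
    simpa using h4
  have hev := htend.eventually (gt_mem_nhds (show (0:ℝ) < ε / 2 by linarith))
  rw [eventually_atTop] at hev
  obtain ⟨T₂, hT₂⟩ := hev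
  refine ⟨max T₁ T₂, fun t htT x hx => ?_⟩
  have htT₁ : T₁ ≤ t := le_trans (le_max_left _ _) htT
  have ht0 : (0:ℝ) ≤ t := le_trans hT₁0 htT₁
  -- per-x continuous data
  have hcx : ContinuousOn (fun s => c x s) (Ici 0) :=
    hcCont.comp ((continuous_const.prodMk continuous_id).continuousOn)
      (fun s hs => ⟨hx, hs⟩)
  have hfx : ContinuousOn (fun s => f x s) (Ici 0) :=
    hfCont.comp ((continuous_const.prodMk continuous_id).continuousOn)
      (fun s hs => ⟨hx, hs⟩)
  set g : ℝ → ℝ := fun s => c x (max s 0) with hgdef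
  set p : ℝ → ℝ := fun s => f x (max s 0) with hpdef
  have hgc : Continuous g := by
    rw [← continuousOn_univ]
    exact hcx.comp ((continuous_id.max continuous_const).continuousOn)
      (fun s _ => le_max_right s 0)
  have hpc : Continuous p := by
    rw [← continuousOn_univ]
    exact hfx.comp ((continuous_id.max continuous_const).continuousOn)
      (fun s _ => le_max_right s 0)
  set r : ℝ := fbar x / cbar x with hrdef
  have hgM : ∀ s, |g s| ≤ M := fun s => (hbd x hx _ (le_max_right s 0)).1
  have hpM : ∀ s, |p s| ≤ M := fun s => (hbd x hx _ (le_max_right s 0)).2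
  have hTc'le : Tc' ≤ T₁ := le_trans (le_max_left _ _) (le_max_left _ _)
  have hTf'le : Tf' ≤ T₁ := le_trans (le_max_right _ _) (le_max_left _ _)
  have hgneg : ∀ s, T₁ ≤ s → g s ≤ -k := by
    intro s hs
    have hs0 : (0:ℝ) ≤ s := le_trans hT₁0 hs
    have h1 := hTc' s (le_trans hTc'le hs) x hx
    have h2 := hle x hx
    have h3 : δ₁ ≤ c₀ / 2 := min_le_left _ _
    have h4 := (abs_le.1 h1).2
    simp only [hgdef, max_eq_left hs0, hkdef]
    linarith
  have hrabs : |r| ≤ R := hrbd x hx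
  have hcbarne : cbar x ≠ 0 := (hcbarneg x hx).ne
  have hrc : r * cbar x = fbar x := div_mul_cancel₀ _ hcbarne
  have hδbd : ∀ s, T₁ ≤ s → |p s - r * g s| ≤ ε * k / 2 := by
    intro s hs
    have hs0 : (0:ℝ) ≤ s := le_trans hT₁0 hs
    have h1 := hTc' s (le_trans hTc'le hs) x hx
    have h2 := hTf' s (le_trans hTf'le hs) x hx
    have heq : p s - r * g s = (f x s - fbar x) + r * (cbar x - c x s) := by
      simp only [hpdef, hgdef, max_eq_left hs0]
      rw [mul_sub, hrc]; ring
    rw [heq]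
    have h3 : |r * (cbar x - c x s)| ≤ R * δ₁ := by
      rw [abs_mul, abs_sub_comm]
      exact mul_le_mul hrabs h1 (abs_nonneg _) hR0
    have h4 : δ₁ ≤ ε * k / (4 * (R + 1)) := min_le_right _ _
    have h5 : R * δ₁ ≤ ε * k / 4 := by
      have h6 : R * δ₁ ≤ R * (ε * k / (4 * (R + 1))) :=
        mul_le_mul_of_nonneg_left h4 hR0
      have h7 : R * (ε * k / (4 * (R + 1))) ≤ ε * k / 4 := by
        rw [← mul_div_assoc, div_le_div_iff₀ (by positivity) (by positivity)]
        nlinarith [mul_pos hε hk]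
      linarith
    calc |(f x s - fbar x) + r * (cbar x - c x s)|
        ≤ |f x s - fbar x| + |r * (cbar x - c x s)| := abs_add_le _ _
      _ ≤ δ₂ + R * δ₁ := add_le_add h2 h3
      _ ≤ ε * k / 4 + ε * k / 4 := by simp only [hδ₂def]; linarith
      _ = ε * k / 2 := by ring
  -- rewrite h x t in terms of g, p
  have hAeq : (∫ s in (0:ℝ)..t, c x s) = ∫ s in (0:ℝ)..t, g s := by
    apply intervalIntegral.integral_congr
    intro s hs
    rw [uIcc_of_le ht0] at hs
    simp only [hgdef, max_eq_left hs.1]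
  have hIeq : (∫ s in (0:ℝ)..t, Real.exp (∫ τ in s..t, c x τ) * f x s)
      = ∫ s in (0:ℝ)..t, Real.exp (∫ τ in s..t, g τ) * p s := by
    apply intervalIntegral.integral_congr
    intro s hs
    rw [uIcc_of_le ht0] at hs
    have hinner : (∫ τ in s..t, c x τ) = ∫ τ in s..t, g τ := by
      apply intervalIntegral.integral_congr
      intro τ hτ
      rw [uIcc_of_le hs.2] at hτ
      simp only [hgdef, max_eq_left (le_trans hs.1 hτ.1)]
    simp only [hpdef, max_eq_left hs.1, hinner]
  have hcore := core g p hgc hpc M k T₁ (ε * k / 2) (φ x) r hk hT₁0 hM0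
    hgM hpM hgneg hδbd t htT₁
  have hexp := hT₂ t (le_trans (le_max_right _ _) htT)
  have hcoef : |φ x| + |r| + T₁ * (M + |r| * M) ≤ C := by
    have hφx : |φ x| ≤ Φ := hΦmax x hx
    have hmono : T₁ * (M + |r| * M) ≤ T₁ * (M + R * M) := by
      apply mul_le_mul_of_nonneg_left _ hT₁0
      nlinarith
    simp only [hCdef]; linarith
  have hhalf : ε * k / 2 / k = ε / 2 := by field_simp
  rw [hdef x t, hAeq, hIeq]
  calc |φ x * Real.exp (∫ s in (0:ℝ)..t, g s)
        - (∫ s in (0:ℝ)..t, Real.exp (∫ τ in s..t, g τ) * p s) - r|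
      ≤ (|φ x| + |r| + T₁ * (M + |r| * M)) * Real.exp (M * T₁ - k * (t - T₁))
        + ε * k / 2 / k := hcore
    _ ≤ C * Real.exp (M * T₁ - k * (t - T₁)) + ε / 2 := by
        rw [hhalf]
        exact add_le_add (mul_le_mul_of_nonneg_right hcoef
          (le_of_lt (Real.exp_pos (M * T₁ - k * (t - T₁))))) le_rfl
    _ ≤ ε / 2 + ε / 2 := add_le_add hexp.le le_rfl
    _ = ε := by ring

end
end

section
/- Let $\Omega\subset\{0<x_1<r\}$ be a bounded domain in $\mathbb{R}^n$, $\rho$ a $C^1(\bar\Omega)$ defining function, and $z(x) = r^2(e^{2\mu} - e^{\mu x_1/r})$. Let $Lu = \rho^2 a_{ij}\partial_{ij}u + \rho b_i\partial_i u + cu - \partial_t u$ with bounded continuous coefficients and $a_{ij}$ uniformly elliptic with constant $\lambda$. Assume there exist $\rho_0,c_0,T_1>0$ with $c\le -c_0$ on $\{0\le\rho\le\rho_0\}\cap(Q\setminus Q_{T_1})$ and $\limsup_{t\to\infty}\sup_{\bar\Omega} c\le 0$. Then there exist $\mu>0$ and $T_0>T_1$ such that $Lz \le -1$ on $Q\setminus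 Q_{T_0} = \Omega\times(T_0,\infty)$. -/
open Set

noncomputable section

lemma spd_comp {n : ℕ} (φ φ' : ℝ → ℝ) (hφ : ∀ t, HasDerivAt φ (φ' t) t)
    (i0 i : Fin n) (x : EuclideanSpace ℝ (Fin n)) :
    spd (fun y => φ (y i0)) i x = (if i0 = i then 1 else 0) * φ' (x i0) := by
  have hproj : HasFDerivAt (fun y : EuclideanSpace ℝ (Fin n) => y i0)
      (EuclideanSpace.proj i0 : EuclideanSpace ℝ (Fin n) →L[ℝ] ℝ) x := by
    exact ContinuousLinearMap.hasFDerivAt (EuclideanSpace.proj (𝕜 := ℝ) i0)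
  have h := (hφ (x i0)).comp_hasFDerivAt x hproj
  have h' : HasFDerivAt (fun y : EuclideanSpace ℝ (Fin n) => φ (y i0))
      (φ' (x i0) • (EuclideanSpace.proj (𝕜 := ℝ) i0)) x := h
  rw [spd, h'.fderiv]
  simp [EuclideanSpace.single_apply, mul_comm]

lemma hasDeriv_lin (r μ t : ℝ) : HasDerivAt (fun s => μ * s / r) (μ / r) t := by
  simpa using ((hasDerivAt_id t).const_mul μ).div_const r

lemma hasDeriv_phi (r μ : ℝ) (hr : r ≠ 0) (t : ℝ) :
    HasDerivAt (fun s => r ^ 2 * (Real.exp (2 * μ) - Real.exp (μ * s / r)))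
      (-(r * μ) * Real.exp (μ * t / r)) t := by
  have h2 := (hasDeriv_lin r μ t).exp
  have h3 := (h2.const_sub (Real.exp (2 * μ))).const_mul (r ^ 2)
  refine h3.congr_deriv ?_
  field_simp

lemma hasDeriv_phi' (r μ : ℝ) (hr : r ≠ 0) (t : ℝ) :
    HasDerivAt (fun s => -(r * μ) * Real.exp (μ * s / r))
      (-(μ ^ 2) * Real.exp (μ * t / r)) t := by
  have h2 := (hasDeriv_lin r μ t).exp
  have h3 := h2.const_mul (-(r * μ))
  refine h3.congr_deriv ?_
  field_simp



lemma L1 (ρx ρ0 M r μ E eμ bb : ℝ) (h0 : 0 < ρ0) (h1 : 0 < ρx) (h2 : ρx ≤ ρ0)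
    (h3 : -M ≤ bb) (h4 : 0 < r) (h5 : 0 < μ) (h6 : 1 ≤ E) (h7 : E ≤ eμ) (h8 : 0 ≤ M) :
    ρx * (bb * (-(r * μ) * E)) ≤ ρ0 * M * r * μ * eμ := by
  have hE0 : (0 : ℝ) < E := by linarith
  have hfac : 0 ≤ ρx * (r * μ) * E := le_of_lt (mul_pos (mul_pos h1 (mul_pos h4 h5)) hE0)
  have h10 : ρx * (r * μ) * E ≤ ρ0 * (r * μ) * eμ :=
    mul_le_mul (mul_le_mul_of_nonneg_right h2 (by positivity)) h7 hE0.le (by positivity)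
  calc ρx * (bb * (-(r * μ) * E)) = (ρx * (r * μ) * E) * (-bb) := by ring
    _ ≤ (ρx * (r * μ) * E) * M := mul_le_mul_of_nonneg_left (by linarith) hfac
    _ ≤ (ρ0 * (r * μ) * eμ) * M := mul_le_mul_of_nonneg_right h10 h8
    _ = ρ0 * M * r * μ * eμ := by ring

lemma L2 (ρx a00 lam μ E : ℝ) (h1 : 0 < ρx) (h2 : 0 < lam) (h3 : lam ≤ a00)
    (h4 : 0 < μ) (h5 : 1 ≤ E) : ρx ^ 2 * (a00 * (-(μ ^ 2) * E)) ≤ 0 := by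
  have ha00 : 0 < a00 := lt_of_lt_of_le h2 h3
  have hE0 : (0 : ℝ) < E := by linarith
  nlinarith [mul_pos (mul_pos (pow_pos h1 2) ha00) (mul_pos (pow_pos h4 2) hE0)]

lemma L3 (cc c0 r E eμ : ℝ) (h1 : cc ≤ -c0) (h2 : 0 < c0) (h3 : 0 < r)
    (h4 : 1 ≤ E) (h5 : E ≤ eμ) :
    cc * (r ^ 2 * (eμ ^ 2 - E)) ≤ -c0 * (r ^ 2 * (eμ ^ 2 - eμ)) := by
  have he : (0 : ℝ) ≤ eμ ^ 2 - eμ := by nlinarith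
  have hz1 : (0 : ℝ) ≤ r ^ 2 * (eμ ^ 2 - eμ) := mul_nonneg (sq_nonneg r) he
  have hz2 : r ^ 2 * (eμ ^ 2 - eμ) ≤ r ^ 2 * (eμ ^ 2 - E) :=
    mul_le_mul_of_nonneg_left (by linarith) (sq_nonneg r)
  calc cc * (r ^ 2 * (eμ ^ 2 - E)) ≤ -c0 * (r ^ 2 * (eμ ^ 2 - E)) :=
        mul_le_mul_of_nonneg_right h1 (le_trans hz1 hz2)
    _ ≤ -c0 * (r ^ 2 * (eμ ^ 2 - eμ)) := mul_le_mul_of_nonpos_left hz2 (by linarith)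

lemma L4 (K A eμ μ : ℝ) (h1 : 0 ≤ K) (h2 : 0 < A) (h3 : 1 ≤ μ) (h4 : 1 ≤ eμ)
    (h5 : (1 + μ / 2) ^ 2 ≤ eμ) (h6 : 4 * K + 4 ≤ A * μ) :
    K * μ * eμ - A * (eμ ^ 2 - eμ) ≤ -1 := by
  have hb1 : μ + μ ^ 2 / 4 ≤ eμ - 1 := by nlinarith [h5]
  have hAμ2 : (4 * K + 4) * μ ≤ A * μ * μ := mul_le_mul_of_nonneg_right h6 (by linarith)
  have hAeμ : A * (μ + μ ^ 2 / 4) ≤ A * (eμ - 1) := mul_le_mul_of_nonneg_left hb1 h2.le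
  have hb2 : 1 ≤ A * (eμ - 1) - K * μ := by nlinarith [hAμ2, hAeμ, h6, h3, h1]
  have hb3 : 1 ≤ eμ * (A * (eμ - 1) - K * μ) := by
    nlinarith [mul_le_mul h4 hb2 zero_le_one (by linarith : (0:ℝ) ≤ eμ)]
  have hid : eμ * (A * (eμ - 1) - K * μ) = A * (eμ ^ 2 - eμ) - K * μ * eμ := by ring
  linarith [hb3, hid]

lemma L5 (ρx ρ0 R M r μ E a00 lam bb B K2 : ℝ)
    (h1 : 0 < ρ0) (h2 : ρ0 ≤ ρx) (h3 : ρx ≤ R) (h4 : lam ≤ a00) (h5 : 0 < lam)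
    (h6 : -M ≤ bb) (h7 : 0 < r) (h8 : 1 ≤ μ) (h9 : 1 ≤ E) (h10 : 0 ≤ M)
    (hB : B = ρ0 ^ 2 * lam) (hK2 : K2 = R * M * r) (h11 : K2 + 2 ≤ B * μ) :
    ρx ^ 2 * (a00 * (-(μ ^ 2) * E)) + ρx * (bb * (-(r * μ) * E)) ≤ -2 := by
  have hμ0 : 0 < μ := lt_of_lt_of_le one_pos h8
  have hE0 : (0 : ℝ) < E := by linarith
  have hR0 : 0 < R := lt_of_lt_of_le h1 (le_trans h2 h3)
  have hμE : (0 : ℝ) ≤ μ ^ 2 * E := le_of_lt (mul_pos (pow_pos hμ0 2) hE0)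
  have hmain : ρ0 ^ 2 * lam ≤ ρx ^ 2 * a00 := by
    apply mul_le_mul _ h4 h5.le (by positivity)
    nlinarith
  have ha : ρx ^ 2 * (a00 * (-(μ ^ 2) * E)) ≤ -(B * (μ ^ 2 * E)) := by
    rw [hB]
    have h' : ρ0 ^ 2 * lam * (μ ^ 2 * E) ≤ ρx ^ 2 * a00 * (μ ^ 2 * E) :=
      mul_le_mul_of_nonneg_right hmain hμE
    nlinarith [h']
  have hb : ρx * (bb * (-(r * μ) * E)) ≤ K2 * (μ * E) := by
    have hfac : 0 ≤ ρx * (r * μ) * E :=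
      le_of_lt (mul_pos (mul_pos (lt_of_lt_of_le h1 h2) (mul_pos h7 hμ0)) hE0)
    have h13 : ρx * (r * μ) * E ≤ R * (r * μ) * E :=
      mul_le_mul_of_nonneg_right (mul_le_mul_of_nonneg_right h3 (by positivity)) hE0.le
    calc ρx * (bb * (-(r * μ) * E)) = (ρx * (r * μ) * E) * (-bb) := by ring
      _ ≤ (ρx * (r * μ) * E) * M := mul_le_mul_of_nonneg_left (by linarith) hfac
      _ ≤ (R * (r * μ) * E) * M := mul_le_mul_of_nonneg_right h13 h10
      _ = K2 * (μ * E) := by rw [hK2]; ring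
  have hq : K2 * μ - B * μ ^ 2 ≤ -2 := by
    have h14 : (K2 + 2) * μ ≤ B * μ * μ := mul_le_mul_of_nonneg_right h11 hμ0.le
    have hK2nn : (0 : ℝ) ≤ K2 := by rw [hK2]; positivity
    nlinarith
  have h15 : (K2 * μ - B * μ ^ 2) * (E - 1) ≤ 0 :=
    mul_nonpos_of_nonpos_of_nonneg (by linarith) (by linarith)
  nlinarith [h15, hq, ha, hb]

lemma L6 (cc ε r E eμ : ℝ) (h1 : cc ≤ ε) (h2 : 0 < ε) (h3 : 0 < r)
    (h4 : 1 ≤ E) (h5 : E ≤ eμ) (h6 : ε * (r ^ 2 * eμ ^ 2) = 1) :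
    cc * (r ^ 2 * (eμ ^ 2 - E)) ≤ 1 := by
  have he : (0 : ℝ) ≤ eμ ^ 2 - E := by nlinarith
  have hz1 : (0 : ℝ) ≤ r ^ 2 * (eμ ^ 2 - E) := mul_nonneg (sq_nonneg r) he
  have hz2 : r ^ 2 * (eμ ^ 2 - E) ≤ r ^ 2 * eμ ^ 2 :=
    mul_le_mul_of_nonneg_left (by linarith) (sq_nonneg r)
  calc cc * (r ^ 2 * (eμ ^ 2 - E)) ≤ ε * (r ^ 2 * (eμ ^ 2 - E)) :=
        mul_le_mul_of_nonneg_right h1 hz1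
    _ ≤ ε * (r ^ 2 * eμ ^ 2) := mul_le_mul_of_nonneg_left hz2 h2.le
    _ = 1 := h6

lemma expq (μ : ℝ) (hμ : 0 ≤ μ) : (1 + μ / 2) ^ 2 ≤ Real.exp μ := by
  have h := Real.add_one_le_exp (μ / 2)
  have h2 : Real.exp (μ / 2) * Real.exp (μ / 2) = Real.exp μ := by
    rw [← Real.exp_add]; ring_nf
  nlinarith [mul_le_mul h h (by linarith) (Real.exp_pos (μ / 2)).le]

set_option maxHeartbeats 1000000 in
/-- There exist `μ > 0` and `T₀ > T₁` such that the barrier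
`z(x) = r²(e^{2μ} - e^{μ x₁/r})` satisfies `Lz ≤ -1` on `Ω × (T₀,∞)`. -/
theorem stmt_13 {n : ℕ} (hn : 0 < n)
    (r : ℝ) (hr : 0 < r)
    (Ω : Set (EuclideanSpace ℝ (Fin n)))
    (hΩopen : IsOpen Ω) (hΩbdd : Bornology.IsBounded Ω) (hΩne : Ω.Nonempty)
    (hslab : ∀ x ∈ Ω, 0 < x ⟨0, hn⟩ ∧ x ⟨0, hn⟩ < r)
    (ρ : EuclideanSpace ℝ (Fin n) → ℝ)
    (hρC1 : ContDiffOn ℝ 1 ρ (closure Ω))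
    (hρpos : ∀ x ∈ Ω, 0 < ρ x)
    (hρ0 : ∀ x ∈ frontier Ω, ρ x = 0)
    (a : Fin n → Fin n → EuclideanSpace ℝ (Fin n) → ℝ → ℝ)
    (b : Fin n → EuclideanSpace ℝ (Fin n) → ℝ → ℝ)
    (c : EuclideanSpace ℝ (Fin n) → ℝ → ℝ)
    (haCont : ∀ i j, ContinuousOn (fun p : EuclideanSpace ℝ (Fin n) × ℝ => a i j p.1 p.2)
      (closure Ω ×ˢ Ici 0))
    (hbCont : ∀ i, ContinuousOn (fun p : EuclideanSpace ℝ (Fin n) × ℝ => b i p.1 p.2)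
      (closure Ω ×ˢ Ici 0))
    (hcCont : ContinuousOn (fun p : EuclideanSpace ℝ (Fin n) × ℝ => c p.1 p.2)
      (closure Ω ×ˢ Ici 0))
    (hsymm : ∀ i j x t, a i j x t = a j i x t)
    (M : ℝ)
    (hbdd : ∀ x ∈ closure Ω, ∀ t : ℝ, 0 ≤ t →
      (∀ i j, |a i j x t| ≤ M) ∧ (∀ i, |b i x t| ≤ M) ∧ |c x t| ≤ M)
    (lam Lam : ℝ) (hlam : 0 < lam) (hLam : 0 < Lam)
    (hell : ∀ x ∈ closure Ω, ∀ t : ℝ, 0 ≤ t → ∀ ξ : Fin n → ℝ,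
      lam * ∑ i, ξ i ^ 2 ≤ ∑ i, ∑ j, a i j x t * ξ i * ξ j ∧
      ∑ i, ∑ j, a i j x t * ξ i * ξ j ≤ Lam * ∑ i, ξ i ^ 2)
    -- `c ≤ -c₀` on `{0 ≤ ρ ≤ ρ₀} ∩ (Q \ Q_{T₁})`
    (ρ0 c0 T1 : ℝ) (hρ0pos : 0 < ρ0) (hc0 : 0 < c0) (hT1 : 0 < T1)
    (hcneg : ∀ x ∈ closure Ω, ∀ t : ℝ, T1 < t → ρ x ≤ ρ0 → c x t ≤ -c0)
    -- `limsup_{t→∞} sup_Ω c ≤ 0`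
    (hclim : ∀ ε > 0, ∃ T : ℝ, ∀ t ≥ T, ∀ x ∈ closure Ω, c x t ≤ ε) :
    ∃ μ > 0, ∃ T0 > T1, ∀ x ∈ Ω, ∀ t : ℝ, T0 < t →
      ρ x ^ 2 * ∑ i, ∑ j, a i j x t *
          spd (spd (fun y => r ^ 2 * (Real.exp (2 * μ) - Real.exp (μ * y ⟨0, hn⟩ / r))) j) i x
        + ρ x * ∑ i, b i x t *
          spd (fun y => r ^ 2 * (Real.exp (2 * μ) - Real.exp (μ * y ⟨0, hn⟩ / r))) i x
        + c x t * (r ^ 2 * (Real.exp (2 * μ) - Real.exp (μ * x ⟨0, hn⟩ / r)))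
        - deriv (fun _ : ℝ => r ^ 2 * (Real.exp (2 * μ) - Real.exp (μ * x ⟨0, hn⟩ / r))) t
      ≤ -1 := by
  classical
  -- `M ≥ 0`
  obtain ⟨x0, hx0⟩ := hΩne
  have hM : 0 ≤ M :=
    le_trans (abs_nonneg _) ((hbdd x0 (subset_closure hx0) 0 le_rfl).2.2)
  -- bound `R` on `ρ`
  obtain ⟨R0, hR0⟩ := (hΩbdd.isCompact_closure).exists_bound_of_continuousOn
    hρC1.continuousOn
  set R : ℝ := max R0 0 with hRdef
  have hRnn : 0 ≤ R := le_max_right _ _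
  have hRb : ∀ x ∈ closure Ω, ρ x ≤ R := fun x hx =>
    le_trans (le_abs_self _) (le_trans (hR0 x hx) (le_max_left _ _))
  -- constants
  set A : ℝ := c0 * r ^ 2 with hAdef
  set B : ℝ := ρ0 ^ 2 * lam with hBdef
  set K : ℝ := ρ0 * M * r with hKdef
  set K2 : ℝ := R * M * r with hK2def
  have hApos : 0 < A := by positivity
  have hBpos : 0 < B := by positivity
  have hKnn : 0 ≤ K := by positivity
  have hK2nn : 0 ≤ K2 := by positivity
  set μ : ℝ := max 1 (max ((4 * K + 4) / A) ((K2 + 2) / B)) with hμdef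
  have hμ1 : 1 ≤ μ := le_max_left _ _
  have hμpos : 0 < μ := lt_of_lt_of_le one_pos hμ1
  have hAμ : 4 * K + 4 ≤ A * μ := by
    have h : (4 * K + 4) / A ≤ μ :=
      le_trans (le_max_left _ ((K2 + 2) / B)) (le_max_right 1 _)
    rw [mul_comm A μ]
    exact (div_le_iff₀ hApos).mp h
  have hBμ : K2 + 2 ≤ B * μ := by
    have h : (K2 + 2) / B ≤ μ :=
      le_trans (le_max_right ((4 * K + 4) / A) _) (le_max_right 1 _)
    rw [mul_comm B μ]
    exact (div_le_iff₀ hBpos).mp h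
  -- choose T0
  set ε : ℝ := 1 / (r ^ 2 * Real.exp (2 * μ)) with hεdef
  have hεpos : 0 < ε := by positivity
  obtain ⟨T, hT⟩ := hclim ε hεpos
  refine ⟨μ, hμpos, max T T1 + 1, by linarith [le_max_right T T1], ?_⟩
  intro x hx t ht
  have hxcl : x ∈ closure Ω := subset_closure hx
  have htT1 : T1 < t := lt_of_le_of_lt (by linarith [le_max_right T T1]) ht
  have ht0 : (0 : ℝ) ≤ t := le_of_lt (lt_trans hT1 htT1)
  have htT : T ≤ t := le_of_lt (lt_of_le_of_lt (by linarith [le_max_left T T1]) ht)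
  set i0 : Fin n := ⟨0, hn⟩ with hi0
  -- derivative computations
  have hspd1 : ∀ (j : Fin n),
      spd (fun y : EuclideanSpace ℝ (Fin n) =>
        r ^ 2 * (Real.exp (2 * μ) - Real.exp (μ * y i0 / r))) j
      = fun z : EuclideanSpace ℝ (Fin n) =>
          (if i0 = j then 1 else 0) * (-(r * μ) * Real.exp (μ * z i0 / r)) := by
    intro j
    funext y
    exact spd_comp _ _ (hasDeriv_phi r μ hr.ne') i0 j y
  have hspd2 : ∀ (i j : Fin n),
      spd (spd (fun y : EuclideanSpace ℝ (Fin n) =>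
        r ^ 2 * (Real.exp (2 * μ) - Real.exp (μ * y i0 / r))) j) i x
      = (if i0 = i then 1 else 0) * ((if i0 = j then 1 else 0) *
          (-(μ ^ 2) * Real.exp (μ * x i0 / r))) := by
    intro i j
    rw [hspd1 j]
    exact spd_comp _ _ (fun s => (hasDeriv_phi' r μ hr.ne' s).const_mul _) i0 i x
  set E : ℝ := Real.exp (μ * x i0 / r) with hEdef
  have hS2 : (∑ i, ∑ j, a i j x t *
      spd (spd (fun y : EuclideanSpace ℝ (Fin n) =>
        r ^ 2 * (Real.exp (2 * μ) - Real.exp (μ * y i0 / r))) j) i x)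
      = a i0 i0 x t * (-(μ ^ 2) * E) := by
    simp only [hspd2]
    simp [mul_ite, ite_mul, mul_zero, zero_mul, mul_one, Finset.sum_ite_eq, Finset.mem_univ]
  have hS1 : (∑ i, b i x t *
      spd (fun y : EuclideanSpace ℝ (Fin n) =>
        r ^ 2 * (Real.exp (2 * μ) - Real.exp (μ * y i0 / r))) i x)
      = b i0 x t * (-(r * μ) * E) := by
    simp only [hspd1]
    simp [mul_ite, ite_mul, mul_zero, zero_mul, mul_one, Finset.sum_ite_eq, Finset.mem_univ]
    exact Or.inl (Or.inl rfl)
  rw [hS2, hS1, deriv_const]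
  -- basic facts about E and exp
  set eμ : ℝ := Real.exp μ with heμdef
  have hexp2 : Real.exp (2 * μ) = eμ ^ 2 := by
    rw [heμdef, ← Real.exp_nat_mul]; norm_num
  have hx01 : 0 < x i0 := (hslab x hx).1
  have hx02 : x i0 < r := (hslab x hx).2
  have hE1 : 1 ≤ E := Real.one_le_exp (by positivity)
  have hEμ : E ≤ eμ := by
    apply Real.exp_le_exp.mpr
    rw [div_le_iff₀ hr]
    exact mul_le_mul_of_nonneg_left hx02.le hμpos.le
  have heμ1 : 1 ≤ eμ := Real.one_le_exp hμpos.le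
  have hq : (1 + μ / 2) ^ 2 ≤ eμ := expq μ hμpos.le
  -- ellipticity at `i0`
  have ha00 : lam ≤ a i0 i0 x t := by
    have h := (hell x hxcl t ht0 (fun j => if j = i0 then 1 else 0)).1
    simpa [mul_ite, ite_mul, mul_zero, zero_mul, mul_one, Finset.sum_ite_eq,
      Finset.mem_univ, ite_pow, one_pow] using h
  have hb0 := (hbdd x hxcl t ht0).2.1 i0
  obtain ⟨hb0l, hb0r⟩ := abs_le.mp hb0
  have hρx : 0 < ρ x := hρpos x hx
  have hρR : ρ x ≤ R := hRb x hxcl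
  rw [hexp2]
  by_cases hcase : ρ x ≤ ρ0
  · -- near boundary: use `c ≤ -c0`
    have hc := hcneg x hxcl t htT1 hcase
    have ht1 : ρ x ^ 2 * (a i0 i0 x t * (-(μ ^ 2) * E)) ≤ 0 :=
      L2 _ _ _ _ _ hρx hlam ha00 hμpos hE1
    have ht2 : ρ x * (b i0 x t * (-(r * μ) * E)) ≤ ρ0 * M * r * μ * eμ :=
      L1 _ _ _ _ _ _ _ _ hρ0pos hρx hcase hb0l hr hμpos hE1 hEμ hM
    have ht3 : c x t * (r ^ 2 * (eμ ^ 2 - E)) ≤ -c0 * (r ^ 2 * (eμ ^ 2 - eμ)) :=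
      L3 _ _ _ _ _ hc hc0 hr hE1 hEμ
    have hfin : K * μ * eμ - A * (eμ ^ 2 - eμ) ≤ -1 :=
      L4 _ _ _ _ hKnn hApos hμ1 heμ1 hq hAμ
    have hKe : ρ0 * M * r * μ * eμ = K * μ * eμ := by rw [hKdef]
    have hAe : -c0 * (r ^ 2 * (eμ ^ 2 - eμ)) = -(A * (eμ ^ 2 - eμ)) := by
      rw [hAdef]; ring
    linarith [ht1, ht2, ht3, hfin, hKe, hAe]
  · -- interior: use ellipticity and smallness of `c`
    push_neg at hcase
    have hcε := hT t htT x hxcl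
    have ht12 : ρ x ^ 2 * (a i0 i0 x t * (-(μ ^ 2) * E))
        + ρ x * (b i0 x t * (-(r * μ) * E)) ≤ -2 :=
      L5 _ _ _ _ _ _ _ _ _ _ _ _ hρ0pos hcase.le hρR ha00 hlam hb0l hr hμ1 hE1 hM
        hBdef hK2def hBμ
    have ht3 : c x t * (r ^ 2 * (eμ ^ 2 - E)) ≤ 1 := by
      refine L6 _ _ _ _ _ hcε hεpos hr hE1 hEμ ?_
      rw [hεdef]
      have h1 : r ^ 2 * Real.exp (2 * μ) ≠ 0 := by positivity
      rw [hexp2] at h1 ⊢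
      field_simp
    linarith

end
end
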